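/- Let u = (u(x)|u'(x)) and v = (v(x)|v'(x)) be elements of Z_2[x]/(x^α-1) × Z_4[x]/(x^β-1) such that u(x)∘v(x) = 0 in Z_4[x]/(x^m-1) where m = lcm(α,β). If u(x) = 0 or v(x) = 0, then u'(x)v'*(x) ≡ 0 (mod x^β - 1) over Z_4. -/
import Mathlib


open Polynomial

/-- Coefficientwise lift of a binary polynomial to `Z₄[x]`, with
coefficients in `{0,1} ⊆ Z₄`. -/
noncomputable def lift24 (p : Polynomial (ZMod 2)) : Polynomial (ZMod 4) :=
  ∑ i ∈ p.support, C (((p.coeff i).val : ℕ) : ZMod 4) * X ^ i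

/-- `θ_k(x^n) = ∑_{i=0}^{k-1} x^{ni}` in `Z₄[x]`. -/
noncomputable def thetaPow (k n : ℕ) : Polynomial (ZMod 4) :=
  ∑ i ∈ Finset.range k, X ^ (n * i)

/-- The bilinear map `∘`, as a polynomial in `Z₄[x]` (to be reduced modulo
`x^m - 1`, `m = lcm(α,β)`). -/
noncomputable def circ (α β : ℕ) (u v : Polynomial (ZMod 2))
    (u' v' : Polynomial (ZMod 4)) : Polynomial (ZMod 4) :=
  2 * lift24 u * thetaPow (Nat.lcm α β / α) α *
      X ^ (Nat.lcm α β - 1 - v.natDegree) * lift24 v.reverse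
    + u' * thetaPow (Nat.lcm α β / β) β *
      X ^ (Nat.lcm α β - 1 - v'.natDegree) * v'.reverse

/-- If `u(x)∘v(x) = 0` in `Z₄[x]/(x^m-1)` and `u(x) = 0` or `v(x) = 0`,
then `u'(x)v'*(x) ≡ 0 (mod x^β - 1)` over `Z₄`. -/
theorem quaternary_part_orthogonality (α β : ℕ) (hα : 0 < α) (hβ : 0 < β)
    (u v : Polynomial (ZMod 2)) (u' v' : Polynomial (ZMod 4))
    (hu : u.degree < (α : ℕ)) (hv : v.degree < (α : ℕ))
    (hu' : u'.degree < (β : ℕ)) (hv' : v'.degree < (β : ℕ))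
    (hcirc : (X ^ Nat.lcm α β - 1 : Polynomial (ZMod 4)) ∣ circ α β u v u' v')
    (hzero : u = 0 ∨ v = 0) :
    (X ^ β - 1 : Polynomial (ZMod 4)) ∣ u' * v'.reverse := by
  have hm0 : 0 < Nat.lcm α β := Nat.pos_of_ne_zero (Nat.lcm_ne_zero hα.ne' hβ.ne')
  have hβm : β ∣ Nat.lcm α β := Nat.dvd_lcm_right α β
  have hkβ : β * (Nat.lcm α β / β) = Nat.lcm α β := Nat.mul_div_cancel' hβm
  set k := Nat.lcm α β / β with hk
  set θ : Polynomial (ZMod 4) := thetaPow k β with hθdef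
  have hθ : (X ^ β - 1 : Polynomial (ZMod 4)) * θ = X ^ Nat.lcm α β - 1 := by
    have h := geom_sum_mul (X ^ β : Polynomial (ZMod 4)) k
    rw [hθdef, thetaPow]
    simp_rw [pow_mul]
    rw [mul_comm, h, ← pow_mul, hkβ]
  set e := Nat.lcm α β - 1 - v'.natDegree with he
  have hc : circ α β u v u' v' = (u' * X ^ e * v'.reverse) * θ := by
    rcases hzero with h | h <;>
      simp only [circ, h, lift24, Polynomial.reverse_zero, Polynomial.support_zero,
        Finset.sum_empty, mul_zero, zero_mul, zero_add, add_zero] <;> ring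
  rw [hc, ← hθ] at hcirc
  obtain ⟨c, hc2⟩ := hcirc
  have hreg : IsLeftRegular θ := by
    have hmon : ((X : Polynomial (ZMod 4)) ^ β - 1) * θ |>.Monic := by
      rw [hθ]
      simpa using monic_X_pow_sub_C (1 : ZMod 4) hm0.ne'
    exact IsLeftRegular.of_mul hmon.isRegular.left
  have key : u' * X ^ e * v'.reverse = (X ^ β - 1) * c := by
    apply hreg
    show θ * (u' * X ^ e * v'.reverse) = θ * ((X ^ β - 1) * c)
    rw [mul_comm θ, hc2]; ring
  have hdvd1 : (X ^ β - 1 : Polynomial (ZMod 4)) ∣ u' * v'.reverse * X ^ e :=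
    ⟨c, by rw [← key]; ring⟩
  have hdvd2 : (X ^ β - 1 : Polynomial (ZMod 4)) ∣ X ^ (e * β) - 1 := by
    have := sub_dvd_pow_sub_pow ((X : Polynomial (ZMod 4)) ^ β) 1 e
    simpa [← pow_mul, mul_comm] using this
  have : u' * v'.reverse = u' * v'.reverse * X ^ e * X ^ (e * (β - 1))
      - u' * v'.reverse * (X ^ (e * β) - 1) := by
    rw [mul_assoc, ← pow_add]
    have h1 : e ≤ e * β := Nat.le_mul_of_pos_right e hβ
    have : e + e * (β - 1) = e * β := by rw [Nat.mul_sub_one]; omega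
    rw [this]; ring
  rw [this]
  exact dvd_sub (hdvd1.mul_right _) (hdvd2.mul_left _)
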